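/- Let K be a complete algebraically closed non-archimedean field with residue field k, and F a restricted lift of p-th power on A^N_K with reduction F̄ on A^N_k. Then the reduction map red : A^N_{K°} → A^N_k restricts to a bijection from Per(F) onto Per(F̄). -/
import Mathlib


/-- The valuation ring `K° = {x : ‖x‖ ≤ 1}` of a nonarchimedean normed field. -/
def unitBallSubring (K : Type*) [NormedField K] [IsUltrametricDist K] : Subring K where
  carrier := {x : K | ‖x‖ ≤ 1}
  one_mem' := by simp
  mul_mem' := by
    intro a b ha hb
    simp only [Set.mem_setOf_eq, norm_mul] at *
    exact mul_le_one₀ ha (norm_nonneg _) hb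
  add_mem' := by
    intro a b ha hb
    exact (IsUltrametricDist.norm_add_le_max a b).trans (max_le ha hb)
  zero_mem' := by simp
  neg_mem' := by
    intro a ha
    simpa using ha

/-- The maximal ideal `K°° = {x : ‖x‖ < 1}` of the valuation ring. -/
def maxIdeal (K : Type*) [NormedField K] [IsUltrametricDist K] :
    Ideal (unitBallSubring K) where
  carrier := {x | ‖(x : K)‖ < 1}
  add_mem' := by
    intro a b ha hb
    calc ‖((a + b : unitBallSubring K) : K)‖ = ‖(a : K) + (b : K)‖ := by norm_cast
    _ ≤ max ‖(a : K)‖ ‖(b : K)‖ := IsUltrametricDist.norm_add_le_max _ _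
    _ < 1 := max_lt ha hb
  zero_mem' := by simp
  smul_mem' := by
    intro c x hx
    calc ‖((c • x : unitBallSubring K) : K)‖ = ‖(c : K)‖ * ‖(x : K)‖ := by
          simp [norm_mul]
    _ ≤ 1 * ‖(x : K)‖ := mul_le_mul_of_nonneg_right c.2 (norm_nonneg _)
    _ < 1 := by simpa using hx

/-- Coordinatewise reduction of a point of `𝔸^N(K°)` to the residue field. -/
def redPt (K : Type*) [NormedField K] [IsUltrametricDist K] {N : ℕ}
    (x : Fin N → unitBallSubring K) : Fin N → (unitBallSubring K ⧸ maxIdeal K) :=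
  fun i => Ideal.Quotient.mk (maxIdeal K) (x i)

/-- Periodic points of a self-map. -/
def perSet {X : Type*} (φ : X → X) : Set X := {x | ∃ n : ℕ, 0 < n ∧ φ^[n] x = x}


open IsUltrametricDist

section Aux

variable {K : Type*} [NormedField K] [IsUltrametricDist K]

lemma usr_norm_sub_le_max (a b : K) : ‖a - b‖ ≤ max ‖a‖ ‖b‖ := by
  rw [sub_eq_add_neg]
  simpa using IsUltrametricDist.norm_add_le_max a (-b)

lemma usr_eval_sub_norm_le {N : ℕ} (P : MvPolynomial (Fin N) (unitBallSubring K))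
    (x y : Fin N → unitBallSubring K) {D : ℝ} (hD : 0 ≤ D)
    (h : ∀ i, ‖((x i : K)) - (y i : K)‖ ≤ D) :
    ‖((MvPolynomial.eval x P : unitBallSubring K) : K)
      - ((MvPolynomial.eval y P : unitBallSubring K) : K)‖ ≤ D := by
  induction P using MvPolynomial.induction_on with
  | C a => simpa using hD
  | add p q hp hq =>
      rw [MvPolynomial.eval_add, MvPolynomial.eval_add]
      push_cast
      calc ‖((MvPolynomial.eval x p : K) + (MvPolynomial.eval x q : K))
            - ((MvPolynomial.eval y p : K) + (MvPolynomial.eval y q : K))‖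
          = ‖((MvPolynomial.eval x p : K) - (MvPolynomial.eval y p : K))
            + ((MvPolynomial.eval x q : K) - (MvPolynomial.eval y q : K))‖ := by ring_nf
        _ ≤ _ := IsUltrametricDist.norm_add_le_max _ _
        _ ≤ D := max_le hp hq
  | mul_X p n hp =>
      rw [MvPolynomial.eval_mul, MvPolynomial.eval_mul, MvPolynomial.eval_X, MvPolynomial.eval_X]
      push_cast
      set a := ((MvPolynomial.eval x p : unitBallSubring K) : K)
      set b := ((MvPolynomial.eval y p : unitBallSubring K) : K)
      have ha : ‖a‖ ≤ 1 := (MvPolynomial.eval x p).2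
      have hv : ‖((y n : K))‖ ≤ 1 := (y n).2
      calc ‖a * (x n : K) - b * (y n : K)‖
          = ‖a * ((x n : K) - (y n : K)) + (a - b) * (y n : K)‖ := by ring_nf
        _ ≤ max ‖a * ((x n : K) - (y n : K))‖ ‖(a - b) * (y n : K)‖ :=
            IsUltrametricDist.norm_add_le_max _ _
        _ ≤ D := by
            apply max_le
            · rw [norm_mul]
              calc ‖a‖ * ‖(x n : K) - (y n : K)‖ ≤ 1 * D :=
                    mul_le_mul ha (h n) (norm_nonneg _) zero_le_one
                _ = D := one_mul D
            · rw [norm_mul]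
              calc ‖a - b‖ * ‖((y n : K))‖ ≤ D * 1 :=
                    mul_le_mul hp hv (norm_nonneg _) hD
                _ = D := mul_one D

lemma usr_pow_sub_pow_norm_le (p : ℕ) (hp : p.Prime) (a b : K)
    (ha : ‖a‖ ≤ 1) (hb : ‖b‖ ≤ 1) :
    ‖a ^ p - b ^ p‖ ≤ max (‖(p : K)‖ * ‖a - b‖) (‖a - b‖ ^ p) := by
  set c := a - b with hc
  have hcle : ‖c‖ ≤ 1 := (usr_norm_sub_le_max a b).trans (max_le ha hb)
  have key : a ^ p - b ^ p
      = ∑ k ∈ Finset.range p, c ^ (k + 1) * b ^ (p - (k + 1)) * (p.choose (k + 1) : K) := by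
    have := add_pow c b p
    have h0 : a = c + b := by rw [hc]; ring
    rw [h0, this, Finset.sum_range_succ']
    simp [Nat.sub_zero]
  rw [key]
  apply IsUltrametricDist.norm_sum_le_of_forall_le_of_nonneg
  · exact le_max_of_le_left (mul_nonneg (norm_nonneg _) (norm_nonneg _))
  intro k hk
  rw [Finset.mem_range] at hk
  rcases eq_or_lt_of_le (Nat.succ_le_of_lt hk) with heq | hlt
  · -- k + 1 = p
    rw [show k + 1 = p from heq]
    refine le_max_of_le_right ?_
    calc ‖c ^ p * b ^ (p - p) * (p.choose p : K)‖
        = ‖c‖ ^ p := by simp [norm_mul, norm_pow]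
      _ ≤ ‖c‖ ^ p := le_refl _
  · -- k + 1 < p
    refine le_max_of_le_left ?_
    obtain ⟨t, ht⟩ := hp.dvd_choose_self (Nat.succ_ne_zero k) hlt
    have hchoose : ‖(p.choose (k + 1) : K)‖ ≤ ‖(p : K)‖ := by
      rw [ht]
      push_cast
      rw [norm_mul]
      calc ‖(p : K)‖ * ‖(t : K)‖ ≤ ‖(p : K)‖ * 1 :=
            mul_le_mul_of_nonneg_left (IsUltrametricDist.norm_natCast_le_one K t)
              (norm_nonneg _)
        _ = ‖(p : K)‖ := mul_one _
    calc ‖c ^ (k + 1) * b ^ (p - (k + 1)) * (p.choose (k + 1) : K)‖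
        = ‖c‖ ^ (k + 1) * ‖b‖ ^ (p - (k + 1)) * ‖(p.choose (k + 1) : K)‖ := by
          rw [norm_mul, norm_mul, norm_pow, norm_pow]
      _ ≤ ‖c‖ * 1 * ‖(p : K)‖ := by
          apply mul_le_mul _ hchoose (norm_nonneg _)
            (mul_nonneg (norm_nonneg _) zero_le_one)
          apply mul_le_mul _ (pow_le_one₀ (norm_nonneg _) hb) (pow_nonneg (norm_nonneg _) _)
            (norm_nonneg _)
          calc ‖c‖ ^ (k + 1) ≤ ‖c‖ ^ 1 :=
                pow_le_pow_of_le_one (norm_nonneg _) hcle (Nat.one_le_iff_ne_zero.mpr (by simp))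
            _ = ‖c‖ := pow_one _
      _ = ‖(p : K)‖ * ‖c‖ := by ring

end Aux

section Main

variable {K : Type*} [NormedField K] [IsUltrametricDist K]

lemma usr_coord_dist {N : ℕ} (x y : Fin N → unitBallSubring K) (i : Fin N) :
    ‖((x i : K)) - (y i : K)‖ ≤ dist x y := by
  have := dist_le_pi_dist x y i
  rwa [Subtype.dist_eq, dist_eq_norm] at this

lemma usr_dist_le_one {N : ℕ} (x y : Fin N → unitBallSubring K) : dist x y ≤ 1 := by
  rw [dist_pi_le_iff zero_le_one]
  intro i
  rw [Subtype.dist_eq, dist_eq_norm]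
  exact (usr_norm_sub_le_max _ _).trans (max_le (x i).2 (y i).2)

lemma usr_pi_ultra {N : ℕ} (a b c : Fin N → unitBallSubring K) :
    dist a c ≤ max (dist a b) (dist b c) := by
  rw [dist_pi_le_iff (le_max_of_le_left dist_nonneg)]
  intro i
  exact (_root_.dist_triangle_max (a i) (b i) (c i)).trans
    (max_le_max (dist_le_pi_dist a b i) (dist_le_pi_dist b c i))

lemma usr_step (p : ℕ) (hp : p.Prime) {N : ℕ}
    (Fi Gi fi : MvPolynomial (Fin N) (unitBallSubring K))
    (ϖ : unitBallSubring K) (hϖ₁ : ‖(p : K)‖ ≤ ‖(ϖ : K)‖)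
    (hFi : Fi = Gi ^ p + MvPolynomial.C ϖ * fi)
    (x y : Fin N → unitBallSubring K) :
    ‖((MvPolynomial.eval x Fi : unitBallSubring K) : K)
        - ((MvPolynomial.eval y Fi : unitBallSubring K) : K)‖
      ≤ max ‖(ϖ : K)‖ (dist x y ^ (p - 1)) * dist x y := by
  set D := dist x y with hDdef
  have hD0 : (0 : ℝ) ≤ D := dist_nonneg
  have hcoord : ∀ i, ‖((x i : K)) - (y i : K)‖ ≤ D := usr_coord_dist x y
  set A := MvPolynomial.eval x Gi
  set B := MvPolynomial.eval y Gi
  have hAB : ‖(A : K) - (B : K)‖ ≤ D := usr_eval_sub_norm_le Gi x y hD0 hcoord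
  have hf : ‖((MvPolynomial.eval x fi : unitBallSubring K) : K)
      - ((MvPolynomial.eval y fi : unitBallSubring K) : K)‖ ≤ D :=
    usr_eval_sub_norm_le fi x y hD0 hcoord
  have hexp : ∀ z : Fin N → unitBallSubring K,
      ((MvPolynomial.eval z Fi : unitBallSubring K) : K)
        = ((MvPolynomial.eval z Gi : unitBallSubring K) : K) ^ p
          + (ϖ : K) * ((MvPolynomial.eval z fi : unitBallSubring K) : K) := by
    intro z
    rw [hFi, MvPolynomial.eval_add, MvPolynomial.eval_pow, MvPolynomial.eval_mul,
      MvPolynomial.eval_C]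
    push_cast
    ring
  rw [hexp x, hexp y]
  have hrearr : ((A : K) ^ p + (ϖ : K) * ((MvPolynomial.eval x fi : unitBallSubring K) : K))
      - ((B : K) ^ p + (ϖ : K) * ((MvPolynomial.eval y fi : unitBallSubring K) : K))
      = ((A : K) ^ p - (B : K) ^ p)
        + (ϖ : K) * (((MvPolynomial.eval x fi : unitBallSubring K) : K)
          - ((MvPolynomial.eval y fi : unitBallSubring K) : K)) := by ring
  rw [hrearr]
  refine (IsUltrametricDist.norm_add_le_max _ _).trans (max_le ?_ ?_)
  · refine (usr_pow_sub_pow_norm_le p hp _ _ A.2 B.2).trans (max_le ?_ ?_)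
    · calc ‖(p : K)‖ * ‖(A : K) - (B : K)‖ ≤ ‖(ϖ : K)‖ * D :=
            mul_le_mul hϖ₁ hAB (norm_nonneg _) (norm_nonneg _)
        _ ≤ max ‖(ϖ : K)‖ (D ^ (p - 1)) * D :=
            mul_le_mul_of_nonneg_right (le_max_left _ _) hD0
    · have h1 : ‖(A : K) - (B : K)‖ ^ p ≤ D ^ p := by
        apply pow_le_pow_left₀ (norm_nonneg _) hAB
      have h2 : D ^ p = D ^ (p - 1) * D := by
        conv_lhs => rw [show p = (p - 1) + 1 from (Nat.succ_pred_eq_of_pos hp.pos).symm]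
        rw [pow_succ]
      calc ‖(A : K) - (B : K)‖ ^ p ≤ D ^ (p - 1) * D := by rw [← h2]; exact h1
        _ ≤ max ‖(ϖ : K)‖ (D ^ (p - 1)) * D :=
            mul_le_mul_of_nonneg_right (le_max_right _ _) hD0
  · rw [norm_mul]
    calc ‖(ϖ : K)‖ * ‖_ - _‖ ≤ ‖(ϖ : K)‖ * D :=
          mul_le_mul_of_nonneg_left hf (norm_nonneg _)
      _ ≤ max ‖(ϖ : K)‖ (D ^ (p - 1)) * D :=
          mul_le_mul_of_nonneg_right (le_max_left _ _) hD0

lemma usr_red_eval {N : ℕ} (P : MvPolynomial (Fin N) (unitBallSubring K))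
    (x : Fin N → unitBallSubring K) :
    Ideal.Quotient.mk (maxIdeal K) (MvPolynomial.eval x P)
      = MvPolynomial.eval (redPt K x) (P.map (Ideal.Quotient.mk (maxIdeal K))) := by
  rw [MvPolynomial.eval_map]
  rw [show MvPolynomial.eval x P = MvPolynomial.eval₂ (RingHom.id _) x P from
    (MvPolynomial.eval₂_id _).symm]
  rw [MvPolynomial.eval₂_comp_left (Ideal.Quotient.mk (maxIdeal K))]
  rfl

end Main

/-- for a restricted lift of `p`-th power `F` (of the explicit shape
`F_i = G_i^p + ϖ f_i` with `G_i = Σ_j c_{i,j} X_i^{q_{i,j}}`, `‖c_{i,j}‖ = 1`, the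
`q_{i,j}` strictly increasing powers of `p`), the reduction map gives a bijection from
`Per(F)` onto `Per(F̄)`, where `F̄` is the reduction of `F` modulo `K°°`. -/
theorem statement8 {K : Type*} [NontriviallyNormedField K] [IsUltrametricDist K]
    [CompleteSpace K] [IsAlgClosed K]
    (p : ℕ) (hp : p.Prime) (hpnorm : ‖(p : K)‖ < 1)
    {N : ℕ} (F G f : Fin N → MvPolynomial (Fin N) (unitBallSubring K))
    (ϖ : unitBallSubring K) (hϖ₁ : ‖(p : K)‖ ≤ ‖(ϖ : K)‖) (hϖ₂ : ‖(ϖ : K)‖ < 1)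
    (m : Fin N → ℕ) (hm : ∀ i, 0 < m i)
    (c : Fin N → ℕ → unitBallSubring K) (q : Fin N → ℕ → ℕ)
    (hc : ∀ i j, j < m i → ‖((c i j : K))‖ = 1)
    (hq : ∀ i j, j < m i → ∃ e : ℕ, q i j = p ^ e)
    (hqmono : ∀ i j j', j < j' → j' < m i → q i j < q i j')
    (hG : ∀ i, G i = ∑ j ∈ Finset.range (m i),
      MvPolynomial.C (c i j) * MvPolynomial.X i ^ (q i j))
    (hdeg : ∀ i, (f i).totalDegree < ((G i) ^ p).totalDegree)
    (hF : ∀ i, F i = (G i) ^ p + MvPolynomial.C ϖ * f i)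
    (Φ : (Fin N → unitBallSubring K) → (Fin N → unitBallSubring K))
    (hΦ : ∀ x i, Φ x i = MvPolynomial.eval x (F i))
    (Φbar : (Fin N → (unitBallSubring K ⧸ maxIdeal K)) →
      (Fin N → (unitBallSubring K ⧸ maxIdeal K)))
    (hΦbar : ∀ y i, Φbar y i =
      MvPolynomial.eval y ((F i).map (Ideal.Quotient.mk (maxIdeal K)))) :
    Set.BijOn (redPt K) (perSet Φ) (perSet Φbar) := by
  -- completeness of the unit ball
  have hcl : IsClosed ((unitBallSubring K : Set K)) := by
    show IsClosed {x : K | ‖x‖ ≤ 1}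
    exact isClosed_le continuous_norm continuous_const
  haveI : CompleteSpace (unitBallSubring K) := hcl.completeSpace_coe
  -- contraction estimates
  have hΦstep : ∀ x y, dist (Φ x) (Φ y) ≤ max ‖(ϖ : K)‖ (dist x y ^ (p - 1)) * dist x y := by
    intro x y
    rw [dist_pi_le_iff (mul_nonneg (le_max_of_le_left (norm_nonneg _)) dist_nonneg)]
    intro i
    rw [Subtype.dist_eq, dist_eq_norm, hΦ x i, hΦ y i]
    exact usr_step p hp (F i) (G i) (f i) ϖ hϖ₁ (hF i) x y
  have hΦle : ∀ x y, dist (Φ x) (Φ y) ≤ dist x y := by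
    intro x y
    refine (hΦstep x y).trans ?_
    calc max ‖(ϖ : K)‖ (dist x y ^ (p - 1)) * dist x y ≤ 1 * dist x y :=
          mul_le_mul_of_nonneg_right
            (max_le hϖ₂.le (pow_le_one₀ dist_nonneg (usr_dist_le_one x y))) dist_nonneg
      _ = dist x y := one_mul _
  have hiter_le : ∀ (n : ℕ) x y, dist (Φ^[n] x) (Φ^[n] y) ≤ dist x y := by
    intro n
    induction n with
    | zero => simp
    | succ n ih =>
      intro x y
      rw [Function.iterate_succ_apply', Function.iterate_succ_apply']
      exact (hΦle _ _).trans (ih x y)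
  have hiter_step : ∀ (n : ℕ), 0 < n → ∀ x y,
      dist (Φ^[n] x) (Φ^[n] y) ≤ max ‖(ϖ : K)‖ (dist x y ^ (p - 1)) * dist x y := by
    intro n hn x y
    obtain ⟨m', rfl⟩ := Nat.exists_eq_succ_of_ne_zero hn.ne'
    rw [Function.iterate_succ_apply, Function.iterate_succ_apply]
    exact (hiter_le m' _ _).trans (hΦstep x y)
  -- commuting with reduction
  have hcomm : ∀ x, redPt K (Φ x) = Φbar (redPt K x) := by
    intro x
    funext i
    show Ideal.Quotient.mk (maxIdeal K) (Φ x i) = Φbar (redPt K x) i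
    rw [hΦ x i, hΦbar, usr_red_eval]
  have hcommit : ∀ (n : ℕ) x, redPt K (Φ^[n] x) = Φbar^[n] (redPt K x) := by
    intro n
    induction n with
    | zero => intro x; rfl
    | succ n ih =>
      intro x
      rw [Function.iterate_succ_apply', Function.iterate_succ_apply', hcomm, ih]
  -- equal reduction implies distance < 1
  have hclose : ∀ x y : Fin N → unitBallSubring K, redPt K x = redPt K y → dist x y < 1 := by
    intro x y hxy
    rw [dist_pi_lt_iff one_pos]
    intro i
    have h1 : Ideal.Quotient.mk (maxIdeal K) (x i) = Ideal.Quotient.mk (maxIdeal K) (y i) :=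
      congrFun hxy i
    have h2 : x i - y i ∈ maxIdeal K := Ideal.Quotient.eq.mp h1
    have h3 : ‖((x i - y i : unitBallSubring K) : K)‖ < 1 := h2
    rw [Subtype.dist_eq, dist_eq_norm]
    calc ‖(x i : K) - (y i : K)‖ = ‖((x i - y i : unitBallSubring K) : K)‖ := by norm_cast
      _ < 1 := h3
  refine ⟨?_, ?_, ?_⟩
  · -- MapsTo
    rintro x ⟨n, hn, hfix⟩
    exact ⟨n, hn, by rw [← hcommit n x, hfix]⟩
  · -- InjOn
    intro x hx y hy hxy
    obtain ⟨a, ha0, hax⟩ := hx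
    obtain ⟨b, hb0, hby⟩ := hy
    have hxab : Φ^[a * b] x = x := by
      rw [Function.iterate_mul]; exact Function.iterate_fixed hax b
    have hyab : Φ^[a * b] y = y := by
      rw [mul_comm, Function.iterate_mul]; exact Function.iterate_fixed hby a
    by_contra hne
    have hD0 : 0 < dist x y := dist_pos.mpr hne
    have hD1 : dist x y < 1 := hclose x y hxy
    have hb1 := hiter_step (a * b) (Nat.mul_pos ha0 hb0) x y
    rw [hxab, hyab] at hb1
    have hmax : max ‖(ϖ : K)‖ (dist x y ^ (p - 1)) < 1 :=
      max_lt hϖ₂ (pow_lt_one₀ dist_nonneg hD1 (by have := hp.two_le; omega))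
    have : dist x y < dist x y := by
      calc dist x y ≤ max ‖(ϖ : K)‖ (dist x y ^ (p - 1)) * dist x y := hb1
        _ < 1 * dist x y := mul_lt_mul_of_pos_right hmax hD0
        _ = dist x y := one_mul _
    exact absurd this (lt_irrefl _)
  · -- SurjOn
    rintro ybar ⟨n, hn, hfix⟩
    choose z hz using fun i => Ideal.Quotient.mk_surjective (I := maxIdeal K) (ybar i)
    set x₀ : Fin N → unitBallSubring K := z with hx₀
    have hred0 : redPt K x₀ = ybar := funext hz
    set Ψ := Φ^[n] with hΨ
    set seq : ℕ → (Fin N → unitBallSubring K) := fun k => Ψ^[k] x₀ with hseq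
    have hredseq : ∀ k, redPt K (seq k) = ybar := by
      intro k
      induction k with
      | zero => exact hred0
      | succ k ih =>
        have h1 : seq (k + 1) = Ψ (seq k) := Function.iterate_succ_apply' Ψ k x₀
        rw [h1, hΨ, hcommit n (seq k), ih, hfix]
    set d0 := dist (seq 0) (seq 1) with hd0
    have hd0nonneg : (0 : ℝ) ≤ d0 := dist_nonneg
    have hd0lt : d0 < 1 := hclose _ _ (by rw [hredseq 0, hredseq 1])
    set ρ := max ‖(ϖ : K)‖ (d0 ^ (p - 1)) with hρ
    have hρ0 : (0 : ℝ) ≤ ρ := le_max_of_le_left (norm_nonneg _)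
    have hρ1 : ρ < 1 :=
      max_lt hϖ₂ (pow_lt_one₀ hd0nonneg hd0lt (by have := hp.two_le; omega))
    have hΨstep : ∀ u v, dist (Ψ u) (Ψ v) ≤ max ‖(ϖ : K)‖ (dist u v ^ (p - 1)) * dist u v :=
      fun u v => hiter_step n hn u v
    have hrec : ∀ k, dist (seq k) (seq (k + 1)) ≤ d0 * ρ ^ k := by
      intro k
      induction k with
      | zero => simp [hd0]
      | succ k ih =>
        have hs1 : seq (k + 1) = Ψ (seq k) := Function.iterate_succ_apply' Ψ k x₀
        have hs2 : seq (k + 2) = Ψ (seq (k + 1)) := Function.iterate_succ_apply' Ψ (k + 1) x₀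
        have he : dist (seq k) (seq (k + 1)) ≤ d0 :=
          ih.trans (mul_le_of_le_one_right hd0nonneg (pow_le_one₀ hρ0 hρ1.le))
        have hmaxle : max ‖(ϖ : K)‖ (dist (seq k) (seq (k + 1)) ^ (p - 1)) ≤ ρ :=
          max_le (le_max_left _ _)
            (le_max_of_le_right (pow_le_pow_left₀ dist_nonneg he (p - 1)))
        calc dist (seq (k + 1)) (seq (k + 2)) = dist (Ψ (seq k)) (Ψ (seq (k + 1))) := by
              rw [hs2, hs1]
          _ ≤ max ‖(ϖ : K)‖ (dist (seq k) (seq (k + 1)) ^ (p - 1)) * dist (seq k) (seq (k + 1)) :=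
              hΨstep _ _
          _ ≤ ρ * (d0 * ρ ^ k) := mul_le_mul hmaxle ih dist_nonneg hρ0
          _ = d0 * ρ ^ (k + 1) := by ring
    have hcauchy : CauchySeq seq := cauchySeq_of_le_geometric ρ d0 hρ1 hrec
    obtain ⟨L, hL⟩ := cauchySeq_tendsto_of_complete hcauchy
    have hΦcont : Continuous Φ :=
      (LipschitzWith.of_dist_le_mul (K := 1)
        (by intro u v; rw [NNReal.coe_one, one_mul]; exact hΦle u v)).continuous
    have hΨcont : Continuous Ψ := hΦcont.iterate n
    have hΨL : Ψ L = L := by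
      have h1 : Filter.Tendsto (fun k => Ψ (seq k)) Filter.atTop (nhds (Ψ L)) :=
        (hΨcont.tendsto L).comp hL
      have h2 : (fun k => Ψ (seq k)) = fun k => seq (k + 1) := by
        funext k; exact (Function.iterate_succ_apply' Ψ k x₀).symm
      rw [h2] at h1
      have h3 : Filter.Tendsto (fun k => seq (k + 1)) Filter.atTop (nhds L) :=
        hL.comp (Filter.tendsto_add_atTop_nat 1)
      exact tendsto_nhds_unique h1 h3
    have hdistbound : ∀ k, dist (seq k) x₀ ≤ d0 := by
      intro k
      induction k with
      | zero => simpa [hseq] using hd0nonneg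
      | succ k ih =>
        refine (usr_pi_ultra (seq (k + 1)) (seq k) x₀).trans (max_le ?_ ih)
        rw [dist_comm]
        exact (hrec k).trans (mul_le_of_le_one_right hd0nonneg (pow_le_one₀ hρ0 hρ1.le))
    have hLx₀ : dist L x₀ ≤ d0 := by
      have ht : Filter.Tendsto (fun k => dist (seq k) x₀) Filter.atTop (nhds (dist L x₀)) :=
        hL.dist tendsto_const_nhds
      exact le_of_tendsto ht (Filter.Eventually.of_forall hdistbound)
    have hredL : redPt K L = ybar := by
      rw [← hred0]
      funext i
      show Ideal.Quotient.mk (maxIdeal K) (L i) = Ideal.Quotient.mk (maxIdeal K) (x₀ i)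
      apply Ideal.Quotient.eq.mpr
      show ‖((L i - x₀ i : unitBallSubring K) : K)‖ < 1
      have hco : dist (L i) (x₀ i) ≤ d0 := (dist_le_pi_dist L x₀ i).trans hLx₀
      rw [Subtype.dist_eq, dist_eq_norm] at hco
      calc ‖((L i - x₀ i : unitBallSubring K) : K)‖ = ‖(L i : K) - (x₀ i : K)‖ := by norm_cast
        _ ≤ d0 := hco
        _ < 1 := hd0lt
    exact ⟨L, ⟨n, hn, hΨL⟩, hredL⟩
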